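/- Let 4 ≤ 2k ≤ n and let G be a collection of subsets of [n], each of size at most k and each having a well-defined type (i.e., min(G) ≤ k for all G ∈ G). If F(n,k,G) is a left-compressed intersecting family, then F(n,k,π(G)) is also intersecting and F(n,k,G) ⊆ F(n,k,π(G)), where π(G) = {π(G) : G ∈ G}. -/

import Mathlib

open Finset

/-- 1-indexed i-th smallest element of a finset of naturals (0 if out of range). -/
def nth (A : Finset ℕ) (i : ℕ) : ℕ := (A.sort (· ≤ ·)).getD (i - 1) 0

/-- Elementwise order on finsets of equal size: `A ≤ B`. -/
def eLE (A B : Finset ℕ) : Prop :=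
  A.card = B.card ∧ ∀ i, 1 ≤ i → i ≤ B.card → nth A i ≤ nth B i

/-- `A ⪯ B`: `|A| ≥ |B|` and the i-th smallest of `A` is ≤ the i-th smallest of `B` for `i ≤ |B|`. -/
def preceq (A B : Finset ℕ) : Prop :=
  B.card ≤ A.card ∧ ∀ i, 1 ≤ i → i ≤ B.card → nth A i ≤ nth B i

/-- `μ_X(l) = |X ∩ [l]|`. -/
def mu (X : Finset ℕ) (l : ℕ) : ℕ := (X ∩ Finset.Icc 1 l).card

/-- `G ∼_si H` (within `[n]`): every `G' ≤ G` and `H' ≤ H` with `G', H' ⊆ [n]` intersect. -/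
def sInt (n : ℕ) (G H : Finset ℕ) : Prop :=
  ∀ G' H' : Finset ℕ, G' ⊆ Finset.Icc 1 n → H' ⊆ Finset.Icc 1 n →
    eLE G' G → eLE H' H → (G' ∩ H').Nonempty

/-- `F(n,k,𝒢)`: the k-subsets `S` of `[n]` with `S ⪯ G` for some `G ∈ 𝒢`. -/
def Fam (n k : ℕ) (𝒢 : Set (Finset ℕ)) : Set (Finset ℕ) :=
  {S | S ⊆ Finset.Icc 1 n ∧ S.card = k ∧ ∃ G ∈ 𝒢, preceq S G}

/-- A family is intersecting if every two members (possibly equal) intersect. -/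
def IsIntersecting (𝒜 : Set (Finset ℕ)) : Prop :=
  ∀ A ∈ 𝒜, ∀ B ∈ 𝒜, (A ∩ B).Nonempty

/-- The type of `G`: the largest `r` with `g_r < k + r`. -/
def typeOf (k : ℕ) (G : Finset ℕ) : ℕ :=
  ((Finset.range (G.card + 1)).filter fun r => 1 ≤ r ∧ nth G r < k + r).sup id

/-- `π(G) = {g_1, …, g_r}` where `r` is the type of `G`. -/
def piG (k : ℕ) (G : Finset ℕ) : Finset ℕ :=
  ((G.sort (· ≤ ·)).take (typeOf k G)).toFinset

lemma nth_eq (A : Finset ℕ) {i : ℕ} (h2 : i ≤ A.card) (h1 : 1 ≤ i) :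
    nth A i = (A.sort (· ≤ ·))[i-1]'(by rw [Finset.length_sort]; omega) := by
  have h : i - 1 < (A.sort (· ≤ ·)).length := by rw [Finset.length_sort]; omega
  simp [nth, List.getD_eq_getElem?_getD, List.getElem?_eq_getElem h]

lemma nth_mem (A : Finset ℕ) {i : ℕ} (h1 : 1 ≤ i) (h2 : i ≤ A.card) : nth A i ∈ A := by
  rw [nth_eq A h2 h1]
  exact (Finset.mem_sort _).1 (List.getElem_mem _)

lemma nth_gap (A : Finset ℕ) {i j : ℕ} (h1 : 1 ≤ i) (hij : i ≤ j) (h2 : j ≤ A.card) :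
    nth A i + (j - i) ≤ nth A j := by
  have hlen : (A.sort (· ≤ ·)).length = A.card := Finset.length_sort _
  have hs := (Finset.sortedLT_sort A).pairwise
  have key : ∀ d : ℕ, ∀ hd : i - 1 + d < (A.sort (· ≤ ·)).length,
      (A.sort (· ≤ ·))[i-1]'(by omega) + d ≤ (A.sort (· ≤ ·))[i-1+d]'(by omega) := by
    intro d
    induction d with
    | zero => intro hd; simp
    | succ d ih =>
      intro hd
      have h1' := ih (by omega)
      have h2' : (A.sort (· ≤ ·))[i-1+d]'(by omega) < (A.sort (· ≤ ·))[i-1+d+1]'(by omega) := by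
        have := List.Pairwise.rel_get_of_lt hs (a := ⟨i-1+d, by omega⟩) (b := ⟨i-1+d+1, by omega⟩)
          (by simp [Fin.lt_def])
        simpa [List.get_eq_getElem] using this
      have he : (A.sort (· ≤ ·))[i-1+(d+1)]'(by omega) = (A.sort (· ≤ ·))[i-1+d+1]'(by omega) :=
        getElem_congr rfl (by omega) _
      rw [he]
      omega
  rw [nth_eq A h2 (le_trans h1 hij), nth_eq A (le_trans hij h2) h1]
  have hmain := key (j - i) (by omega)
  have he : (A.sort (· ≤ ·))[i-1+(j-i)]'(by omega) = (A.sort (· ≤ ·))[j-1]'(by omega) :=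
    getElem_congr rfl (by omega) _
  rw [he] at hmain
  omega

lemma nth_mono (A : Finset ℕ) {i j : ℕ} (h1 : 1 ≤ i) (hij : i ≤ j) (h2 : j ≤ A.card) :
    nth A i ≤ nth A j := by
  have := nth_gap A h1 hij h2
  omega

lemma mem_le_nth {A : Finset ℕ} {x : ℕ} (hx : x ∈ A) : x ≤ nth A A.card := by
  rw [← Finset.mem_sort (· ≤ ·), List.mem_iff_getElem] at hx
  obtain ⟨i, hi, rfl⟩ := hx
  have hlen : (A.sort (· ≤ ·)).length = A.card := Finset.length_sort _
  have hc : 1 ≤ A.card := by omega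
  rw [nth_eq A le_rfl hc]
  have := List.Pairwise.rel_get_of_le (Finset.pairwise_sort A (· ≤ ·))
    (a := ⟨i, hi⟩) (b := ⟨A.card - 1, by omega⟩) (by simp [Fin.le_def]; omega)
  simpa [List.get_eq_getElem] using this

lemma take_toFinset_subset_filter (A : Finset ℕ) {j : ℕ} (h1 : 1 ≤ j) (h2 : j ≤ A.card) :
    ((A.sort (· ≤ ·)).take j).toFinset ⊆ A.filter (· ≤ nth A j) := by
  intro x hx
  rw [List.mem_toFinset, List.mem_take_iff_getElem] at hx
  obtain ⟨i, hi, rfl⟩ := hx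
  have hlen : (A.sort (· ≤ ·)).length = A.card := Finset.length_sort _
  rw [Finset.mem_filter]
  refine ⟨(Finset.mem_sort _).1 (List.getElem_mem _), ?_⟩
  rw [nth_eq A h2 h1]
  have := List.Pairwise.rel_get_of_le (Finset.pairwise_sort A (· ≤ ·))
    (a := ⟨i, by omega⟩) (b := ⟨j - 1, by omega⟩) (by simp [Fin.le_def]; omega)
  simpa [List.get_eq_getElem] using this

lemma take_toFinset_card (A : Finset ℕ) {j : ℕ} (h2 : j ≤ A.card) :
    ((A.sort (· ≤ ·)).take j).toFinset.card = j := by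
  rw [List.toFinset_card_of_nodup (((A.sort (· ≤ ·)).take_sublist j).nodup (Finset.sort_nodup _ _))]
  rw [List.length_take, Finset.length_sort]
  omega

lemma le_card_filter_of_nth_le (A : Finset ℕ) {j y : ℕ} (h1 : 1 ≤ j) (h2 : j ≤ A.card)
    (h : nth A j ≤ y) : j ≤ (A.filter (· ≤ y)).card := by
  have hsub : ((A.sort (· ≤ ·)).take j).toFinset ⊆ A.filter (· ≤ y) := by
    refine (take_toFinset_subset_filter A h1 h2).trans ?_
    intro x hx
    rw [Finset.mem_filter] at hx ⊢
    exact ⟨hx.1, le_trans hx.2 h⟩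
  calc j = _ := (take_toFinset_card A h2).symm
    _ ≤ _ := Finset.card_le_card hsub

lemma nth_le_of_le_card_filter (A : Finset ℕ) {j y : ℕ} (h1 : 1 ≤ j) (h2 : j ≤ A.card)
    (h : j ≤ (A.filter (· ≤ y)).card) : nth A j ≤ y := by
  by_contra hy
  push_neg at hy
  have hlen : (A.sort (· ≤ ·)).length = A.card := Finset.length_sort _
  rw [nth_eq A h2 h1] at hy
  have hsub : A.filter (· ≤ y) ⊆ ((A.sort (· ≤ ·)).take (j-1)).toFinset := by
    intro x hx
    rw [Finset.mem_filter] at hx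
    obtain ⟨hxA, hxy⟩ := hx
    rw [← Finset.mem_sort (· ≤ ·), List.mem_iff_getElem] at hxA
    obtain ⟨i, hi, rfl⟩ := hxA
    rw [List.mem_toFinset, List.mem_take_iff_getElem]
    refine ⟨i, ?_, rfl⟩
    rw [lt_min_iff]
    refine ⟨?_, hi⟩
    by_contra hij
    push_neg at hij
    have hle : (A.sort (· ≤ ·))[j-1]'(by omega) ≤ (A.sort (· ≤ ·))[i] := by
      have := List.Pairwise.rel_get_of_le (Finset.pairwise_sort A (· ≤ ·))
        (a := ⟨j-1, by omega⟩) (b := ⟨i, hi⟩) (by simp [Fin.le_def]; omega)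
      simpa [List.get_eq_getElem] using this
    omega
  have hc1 := Finset.card_le_card hsub
  have hc2 : ((A.sort (· ≤ ·)).take (j-1)).toFinset.card ≤ j - 1 :=
    le_trans (List.toFinset_card_le _) (by rw [List.length_take]; omega)
  omega

lemma nth_anti_subset {P A : Finset ℕ} (hPA : P ⊆ A) {j : ℕ} (h1 : 1 ≤ j) (h2 : j ≤ P.card) :
    nth A j ≤ nth P j := by
  apply nth_le_of_le_card_filter A h1 (h2.trans (Finset.card_le_card hPA))
  have hmono : P.filter (· ≤ nth P j) ⊆ A.filter (· ≤ nth P j) :=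
    Finset.filter_subset_filter _ hPA
  exact le_trans (le_card_filter_of_nth_le P h1 h2 le_rfl) (Finset.card_le_card hmono)

lemma take_toFinset_subset (A : Finset ℕ) (r : ℕ) :
    ((A.sort (· ≤ ·)).take r).toFinset ⊆ A := by
  intro x hx
  rw [List.mem_toFinset] at hx
  exact (Finset.mem_sort _).1 (List.mem_of_mem_take hx)

lemma take_nth (A : Finset ℕ) {r j : ℕ} (hr : r ≤ A.card) (h1 : 1 ≤ j) (hj : j ≤ r) :
    nth (((A.sort (· ≤ ·)).take r).toFinset) j = nth A j := by
  set T := ((A.sort (· ≤ ·)).take r).toFinset with hT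
  have hTc : T.card = r := take_toFinset_card A hr
  have hTA : T ⊆ A := take_toFinset_subset A r
  apply le_antisymm
  · apply nth_le_of_le_card_filter T h1 (by omega)
    have hsub : ((A.sort (· ≤ ·)).take j).toFinset ⊆ T.filter (· ≤ nth A j) := by
      intro x hx
      rw [Finset.mem_filter]
      constructor
      · show x ∈ T
        rw [hT, List.mem_toFinset]
        rw [List.mem_toFinset] at hx
        have heq : List.take j (A.sort (· ≤ ·)) = List.take j (List.take r (A.sort (· ≤ ·))) := by
          rw [List.take_take, min_eq_left hj]
        rw [heq] at hx
        exact List.mem_of_mem_take hx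
      · have := take_toFinset_subset_filter A h1 (le_trans hj hr) hx
        exact (Finset.mem_filter.1 this).2
    calc j = _ := (take_toFinset_card A (le_trans hj hr)).symm
      _ ≤ _ := Finset.card_le_card hsub
  · exact nth_anti_subset hTA h1 (by omega)

lemma mem_take_le (A : Finset ℕ) {r x : ℕ} (hr : r ≤ A.card) (h1 : 1 ≤ r)
    (hx : x ∈ ((A.sort (· ≤ ·)).take r).toFinset) : x ≤ nth A r := by
  rw [List.mem_toFinset, List.mem_take_iff_getElem] at hx
  obtain ⟨i, hi, rfl⟩ := hx
  have hlen : (A.sort (· ≤ ·)).length = A.card := Finset.length_sort _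
  rw [nth_eq A hr h1]
  have := List.Pairwise.rel_get_of_le (Finset.pairwise_sort A (· ≤ ·))
    (a := ⟨i, by omega⟩) (b := ⟨r - 1, by omega⟩) (by simp [Fin.le_def]; omega)
  simpa [List.get_eq_getElem] using this

lemma typeOf_le_card (k : ℕ) (G : Finset ℕ) : typeOf k G ≤ G.card := by
  apply Finset.sup_le
  intro r hr
  simp only [Finset.mem_filter, Finset.mem_range] at hr
  simpa [id] using Nat.lt_succ_iff.1 hr.1

lemma typeOf_spec (k : ℕ) (G : Finset ℕ) (hne : 1 ≤ G.card) (hmin : nth G 1 < k + 1) :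
    1 ≤ typeOf k G ∧ nth G (typeOf k G) < k + typeOf k G := by
  set s := (Finset.range (G.card + 1)).filter fun r => 1 ≤ r ∧ nth G r < k + r with hs
  have h1 : 1 ∈ s := by
    rw [hs, Finset.mem_filter, Finset.mem_range]
    exact ⟨by omega, le_rfl, hmin⟩
  have hne' : s.Nonempty := ⟨1, h1⟩
  have hsup : s.sup id ∈ s := by
    have hmax := Finset.max'_mem s hne'
    have heq : s.sup id = s.max' hne' := by
      apply le_antisymm
      · exact Finset.sup_le fun b hb => Finset.le_max' s b hb
      · exact Finset.le_sup (f := id) hmax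
    rw [heq]; exact hmax
  have h2 : typeOf k G = s.sup id := rfl
  rw [hs, Finset.mem_filter] at hsup
  rw [h2]
  exact ⟨hsup.2.1, hsup.2.2⟩

lemma typeOf_gt (k : ℕ) (G : Finset ℕ) {j : ℕ} (hj : typeOf k G < j) (hjc : j ≤ G.card) :
    k + j ≤ nth G j := by
  by_contra hlt
  push_neg at hlt
  have hmem : j ∈ (Finset.range (G.card + 1)).filter fun r => 1 ≤ r ∧ nth G r < k + r := by
    rw [Finset.mem_filter, Finset.mem_range]
    exact ⟨by omega, by omega, hlt⟩
  have := Finset.le_sup (f := id) hmem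
  simp only [id] at this
  exact absurd this (by rw [show ((Finset.range (G.card + 1)).filter
    fun r => 1 ≤ r ∧ nth G r < k + r).sup id = typeOf k G from rfl]; omega)

/-- Key construction lemma. -/
lemma key (n k : ℕ) (hk2 : 2 ≤ k) (hn : 2*k ≤ n) (𝒢 : Set (Finset ℕ))
    (h𝒢 : ∀ G ∈ 𝒢, G ⊆ Finset.Icc 1 n ∧ G.card ≤ k ∧ ∃ x ∈ G, x ≤ k)
    {A W : Finset ℕ} (hW : W ∈ 𝒢) (hA : A ⊆ Finset.Icc 1 n) (hAc : A.card = k)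
    (hp : preceq A (piG k W)) :
    ∃ P : Finset ℕ, P ⊆ A ∧ P ⊆ Finset.Icc 1 (2*k) ∧ P.card = typeOf k W ∧
      typeOf k W ≤ k ∧ 1 ≤ typeOf k W ∧
      ∀ A' : Finset ℕ, P ⊆ A' → A' ⊆ Finset.Icc 1 (2*k) → A'.card = k → A' ∈ Fam n k 𝒢 := by
  obtain ⟨hWn, hWk, x, hxW, hxk⟩ := h𝒢 W hW
  set r := typeOf k W with hr
  have hrs : r ≤ W.card := typeOf_le_card k W
  have hWc1 : 1 ≤ W.card := Finset.card_pos.2 ⟨x, hxW⟩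
  have hmin : nth W 1 ≤ k := by
    apply nth_le_of_le_card_filter W le_rfl hWc1
    have : x ∈ W.filter (· ≤ k) := Finset.mem_filter.2 ⟨hxW, hxk⟩
    exact Finset.card_pos.2 ⟨x, this⟩
  obtain ⟨hr1, hrlt⟩ := typeOf_spec k W hWc1 (by omega)
  rw [← hr] at hr1 hrlt
  have hpiGc : (piG k W).card = r := take_toFinset_card W hrs
  obtain ⟨hcard_le, hnth⟩ := hp
  rw [hpiGc] at hcard_le hnth
  -- facts about A's nth vs W's nth on [1, r]
  have hAW : ∀ j, 1 ≤ j → j ≤ r → nth A j ≤ nth W j := by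
    intro j hj1 hjr
    calc nth A j ≤ nth (piG k W) j := hnth j hj1 hjr
      _ = nth W j := take_nth W hrs hj1 hjr
  set P := ((A.sort (· ≤ ·)).take r).toFinset with hP
  have hrk : r ≤ k := le_trans hrs hWk
  have hrA : r ≤ A.card := by omega
  have hPc : P.card = r := take_toFinset_card A hrA
  have hPA : P ⊆ A := take_toFinset_subset A r
  have hPIcc : P ⊆ Finset.Icc 1 (2*k) := by
    intro y hy
    have hy1 : 1 ≤ y := by
      have := hA (hPA hy)
      rw [Finset.mem_Icc] at this
      exact this.1
    have hy2 : y ≤ nth A r := mem_take_le A hrA hr1 hy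
    have hy3 : nth A r ≤ nth W r := hAW r hr1 le_rfl
    rw [Finset.mem_Icc]
    exact ⟨hy1, by omega⟩
  refine ⟨P, hPA, hPIcc, hPc, hrk, hr1, ?_⟩
  intro A' hPA' hA'Icc hA'c
  refine ⟨hA'Icc.trans (Finset.Icc_subset_Icc_right hn), hA'c, W, hW, ?_⟩
  constructor
  · omega
  intro j hj1 hjW
  have hjk : j ≤ k := le_trans hjW hWk
  rcases le_or_gt j r with hjr | hjr
  · calc nth A' j ≤ nth P j := nth_anti_subset hPA' hj1 (by omega)
      _ = nth A j := take_nth A hrA hj1 hjr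
      _ ≤ nth W j := hAW j hj1 hjr
  · have hgap : nth A' j + (k - j) ≤ nth A' k := nth_gap A' hj1 hjk (by omega)
    have hmemA' : nth A' k ∈ A' := nth_mem A' (by omega) (by omega)
    have hub : nth A' k ≤ 2*k := by
      have := hA'Icc hmemA'
      rw [Finset.mem_Icc] at this
      exact this.2
    have hlb : k + j ≤ nth W j := typeOf_gt k W hjr hjW
    omega


set_option linter.unusedVariables false in
theorem stmt13 (n k : ℕ) (h4 : 4 ≤ 2 * k) (hn : 2 * k ≤ n) (𝒢 : Set (Finset ℕ))
    (h𝒢 : ∀ G ∈ 𝒢, G ⊆ Finset.Icc 1 n ∧ G.card ≤ k ∧ ∃ x ∈ G, x ≤ k)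
    (hlc : ∀ A ∈ Fam n k 𝒢, ∀ B, B ⊆ Finset.Icc 1 n → B.card = k → eLE B A → B ∈ Fam n k 𝒢)
    (hint : IsIntersecting (Fam n k 𝒢)) :
    IsIntersecting (Fam n k (piG k '' 𝒢)) ∧ Fam n k 𝒢 ⊆ Fam n k (piG k '' 𝒢) := by
  have hk2 : 2 ≤ k := by omega
  constructor
  · -- intersecting
    intro A hAmem B hBmem
    obtain ⟨hA, hAc, PW, ⟨W, hW, rfl⟩, hpA⟩ := hAmem
    obtain ⟨hB, hBc, PV, ⟨V, hV, rfl⟩, hpB⟩ := hBmem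
    by_contra hcon
    rw [Finset.not_nonempty_iff_eq_empty] at hcon
    have hdisAB : Disjoint A B := Finset.disjoint_iff_inter_eq_empty.2 hcon
    obtain ⟨P, hPA, hPIcc, hPc, hrk, hr1, hPbuild⟩ := key n k hk2 hn 𝒢 h𝒢 hW hA hAc hpA
    obtain ⟨Q, hQB, hQIcc, hQc, htk, ht1, hQbuild⟩ := key n k hk2 hn 𝒢 h𝒢 hV hB hBc hpB
    set r := typeOf k W
    set t := typeOf k V
    have hPQdis : Disjoint P Q := hdisAB.mono hPA hQB
    set R := Finset.Icc 1 (2*k) \ (P ∪ Q) with hR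
    have hPQIcc : P ∪ Q ⊆ Finset.Icc 1 (2*k) := Finset.union_subset hPIcc hQIcc
    have hRcard : R.card = 2*k - (r + t) := by
      rw [hR, Finset.card_sdiff_of_subset hPQIcc, Finset.card_union_of_disjoint hPQdis, hPc, hQc,
        Nat.card_Icc]
      omega
    have hX : k - r ≤ R.card := by omega
    obtain ⟨X, hXR, hXc⟩ := Finset.exists_subset_card_eq hX
    have hRdisP : Disjoint R P :=
      Finset.disjoint_of_subset_right Finset.subset_union_left Finset.sdiff_disjoint
    have hRdisQ : Disjoint R Q :=
      Finset.disjoint_of_subset_right Finset.subset_union_right Finset.sdiff_disjoint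
    have hRIcc : R ⊆ Finset.Icc 1 (2*k) := Finset.sdiff_subset
    set A' := P ∪ X with hA'
    set B' := Q ∪ (R \ X) with hB'
    have hdisPX : Disjoint P X := (hRdisP.mono_left hXR).symm
    have hA'c : A'.card = k := by
      rw [hA', Finset.card_union_of_disjoint hdisPX, hPc, hXc]
      omega
    have hRXc : (R \ X).card = k - t := by
      rw [Finset.card_sdiff_of_subset hXR, hRcard, hXc]
      omega
    have hdisQRX : Disjoint Q (R \ X) :=
      (hRdisQ.mono_left Finset.sdiff_subset).symm
    have hB'c : B'.card = k := by
      rw [hB', Finset.card_union_of_disjoint hdisQRX, hQc, hRXc]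
      omega
    have hA'Icc : A' ⊆ Finset.Icc 1 (2*k) :=
      Finset.union_subset hPIcc (hXR.trans hRIcc)
    have hB'Icc : B' ⊆ Finset.Icc 1 (2*k) :=
      Finset.union_subset hQIcc ((Finset.sdiff_subset).trans hRIcc)
    have hA'mem : A' ∈ Fam n k 𝒢 := hPbuild A' Finset.subset_union_left hA'Icc hA'c
    have hB'mem : B' ∈ Fam n k 𝒢 := hQbuild B' Finset.subset_union_left hB'Icc hB'c
    have hdisA'B' : Disjoint A' B' := by
      rw [hA', hB', Finset.disjoint_union_left]
      constructor
      · rw [Finset.disjoint_union_right]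
        exact ⟨hPQdis, (hRdisP.mono_left Finset.sdiff_subset).symm⟩
      · rw [Finset.disjoint_union_right]
        exact ⟨hRdisQ.mono_left hXR, Finset.disjoint_sdiff⟩
    have := hint A' hA'mem B' hB'mem
    rw [Finset.disjoint_iff_inter_eq_empty.1 hdisA'B'] at this
    exact absurd this (by simp)
  · -- inclusion
    rintro S ⟨hS, hSc, G, hG, hGcard, hnth⟩
    refine ⟨hS, hSc, piG k G, ⟨G, hG, rfl⟩, ?_, ?_⟩
    · rw [piG, take_toFinset_card G (typeOf_le_card k G)]
      exact le_trans (typeOf_le_card k G) hGcard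
    · intro j hj1 hj2
      rw [piG, take_toFinset_card G (typeOf_le_card k G)] at hj2
      rw [piG, take_nth G (typeOf_le_card k G) hj1 hj2]
      exact hnth j hj1 (le_trans hj2 (typeOf_le_card k G))
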